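/- arXiv:2212.13954 — 7 statements merged into one kernel-verified Lean document; each statement's English description precedes it below -/
import Mathlib

section
/- Let l > 0 and σ > 0, set K_σ := {k > 0 : cos(kl) = 0 or 2k·sin(kl) = σ·cos(kl)}, and suppose κ : ℕ → ℝ is a strictly increasing function whose range is exactly K_σ. Then lim_{N→∞} (1/N)·∑_{n=0}^{N−1} ( κ(n)² − (nπ/(2l))² ) = σ/(2l). -/
open Real Filter Topology

lemma two_star_exu (l σ : ℝ) (hl : 0 < l) (hσ : 0 < σ) (m : ℕ) :
    ∃! k : ℝ, k ∈ Set.Ioo ((m : ℝ) * π / l) ((m : ℝ) * π / l + π / (2 * l)) ∧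
      2 * k * Real.sin (k * l) = σ * Real.cos (k * l) := by
  have hl' : l ≠ 0 := hl.ne'
  set a : ℝ := (m : ℝ) * π / l with ha
  set b : ℝ := a + π / (2 * l) with hb
  have hal : a * l = m * π := by rw [ha]; field_simp
  have hbl : b * l = m * π + π / 2 := by rw [hb, ha]; field_simp
  have hπl : 0 < π / (2 * l) := by positivity
  have hab : a < b := by rw [hb]; linarith
  have ha0 : 0 ≤ a := by positivity
  have hb0 : 0 < b := by rw [hb]; linarith
  set h : ℝ → ℝ := fun k => 2 * k * Real.sin (k * l) - σ * Real.cos (k * l) with hh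
  have hcont : ContinuousOn h (Set.uIcc a b) := by fun_prop
  have hsinA : Real.sin (a * l) = 0 := by
    rw [hal]; exact_mod_cast Real.sin_int_mul_pi (m : ℤ)
  have hcosA : Real.cos (a * l) = (-1) ^ m := by
    rw [hal]; simpa using Real.cos_nat_mul_pi_sub 0 m
  have hsinB : Real.sin (b * l) = (-1) ^ m := by
    rw [hbl, Real.sin_add_pi_div_two]
    simpa using Real.cos_nat_mul_pi_sub 0 m
  have hcosB : Real.cos (b * l) = 0 := by
    rw [hbl, Real.cos_add_pi_div_two]
    simp [Real.sin_nat_mul_pi]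
  have hhA : h a = -σ * (-1) ^ m := by rw [hh]; simp [hsinA, hcosA]
  have hhB : h b = 2 * b * (-1) ^ m := by rw [hh]; simp [hsinB, hcosB]
  have hprod : h a * h b < 0 := by
    rw [hhA, hhB]
    have : -σ * (-1) ^ m * (2 * b * (-1) ^ m) = -(σ * 2 * b) * ((-1) ^ m * (-1) ^ m) := by ring
    rw [this, ← pow_add, ← two_mul, pow_mul]
    simp
    positivity
  -- existence
  have hmem : (0 : ℝ) ∈ Set.uIcc (h a) (h b) := by
    rcases mul_neg_iff.1 hprod with ⟨h1, h2⟩ | ⟨h1, h2⟩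
    · exact Set.mem_uIcc.2 (Or.inr ⟨h2.le, h1.le⟩)
    · exact Set.mem_uIcc.2 (Or.inl ⟨h1.le, h2.le⟩)
  obtain ⟨k, hk, hk0⟩ := intermediate_value_uIcc hcont hmem
  rw [Set.uIcc_of_le hab.le] at hk
  have hkIoo : k ∈ Set.Ioo a b := by
    rcases hk.1.lt_or_eq with h1 | h1
    · rcases hk.2.lt_or_eq with h2 | h2
      · exact ⟨h1, h2⟩
      · exfalso; rw [h2] at hk0
        rw [hhB] at hk0
        have : (2 * b) * ((-1:ℝ) ^ m) ≠ 0 := by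
          apply mul_ne_zero (by positivity)
          simp
        exact this hk0
    · exfalso; rw [← h1] at hk0
      rw [hhA] at hk0
      have : (-σ) * ((-1:ℝ) ^ m) ≠ 0 := by
        apply mul_ne_zero (by simp; positivity)
        simp
      exact this hk0
  refine ⟨k, ⟨hkIoo, by have := hk0; rw [hh] at this; simpa [sub_eq_zero] using this⟩, ?_⟩
  -- uniqueness
  have key : ∀ x ∈ Set.Ioo a b, 2 * x * Real.sin (x * l) = σ * Real.cos (x * l) →
      2 * x * Real.tan (x * l - m * π) = σ ∧ x * l - m * π ∈ Set.Ioo 0 (π / 2) := by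
    intro x hx hxeq
    have hx1 : a * l < x * l := by exact mul_lt_mul_of_pos_right hx.1 hl
    have hx2 : x * l < b * l := by exact mul_lt_mul_of_pos_right hx.2 hl
    rw [hal] at hx1; rw [hbl] at hx2
    have ht : x * l - m * π ∈ Set.Ioo 0 (π / 2) := ⟨by linarith, by linarith⟩
    have hcosx : Real.cos (x * l) ≠ 0 := by
      intro hc
      obtain ⟨j, hj⟩ := Real.cos_eq_zero_iff.1 hc
      have hπ : (0:ℝ) < π := Real.pi_pos
      have : ((2*m:ℤ) : ℝ) * π < ((2 * j + 1 : ℤ) : ℝ) * π ∧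
          ((2 * j + 1 : ℤ) : ℝ) * π < ((2*m+1:ℤ) : ℝ) * π := by
        push_cast
        constructor <;> nlinarith [hj ▸ hx1, hj ▸ hx2]
      have h1 : (2*m : ℤ) < 2 * j + 1 := by
        exact_mod_cast (mul_lt_mul_iff_left₀ hπ).1 this.1
      have h2 : (2 * j + 1 : ℤ) < 2*m+1 := by
        exact_mod_cast (mul_lt_mul_iff_left₀ hπ).1 this.2
      omega
    have htan : Real.tan (x * l - m * π) = Real.tan (x * l) := by
      simpa using Real.tan_periodic.sub_int_mul_eq (x := x * l) (m : ℤ)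
    rw [htan, Real.tan_eq_sin_div_cos]
    constructor
    · field_simp
      linarith [hxeq]
    · exact ht
  rintro y ⟨hy, hyeq⟩
  have hky := key k hkIoo (by rw [hh] at hk0; simpa [sub_eq_zero] using hk0)
  have hyy := key y hy hyeq
  have hy0 : 0 < y := lt_of_le_of_lt ha0 hy.1
  have hk0' : 0 < k := lt_of_le_of_lt ha0 hkIoo.1
  have hmemy : y * l - m * π ∈ Set.Ioo (-(π/2)) (π/2) :=
    ⟨by linarith [hyy.2.1, Real.pi_pos], hyy.2.2⟩
  have hmemk : k * l - m * π ∈ Set.Ioo (-(π/2)) (π/2) :=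
    ⟨by linarith [hky.2.1, Real.pi_pos], hky.2.2⟩
  have hty : 0 < Real.tan (y * l - m * π) :=
    Real.tan_pos_of_pos_of_lt_pi_div_two hyy.2.1 hyy.2.2
  have htk : 0 < Real.tan (k * l - m * π) :=
    Real.tan_pos_of_pos_of_lt_pi_div_two hky.2.1 hky.2.2
  rcases lt_trichotomy y k with hlt | heq | hgt
  · exfalso
    have hmul := mul_lt_mul_of_pos_right hlt hl
    have h1 : Real.tan (y * l - m * π) < Real.tan (k * l - m * π) :=
      Real.strictMonoOn_tan hmemy hmemk (by linarith)
    have : σ < σ := by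
      calc σ = 2 * y * Real.tan (y * l - m * π) := hyy.1.symm
        _ < 2 * k * Real.tan (k * l - m * π) :=
          mul_lt_mul (by linarith) h1.le hty (by linarith)
        _ = σ := hky.1
    exact lt_irrefl σ this
  · exact heq
  · exfalso
    have hmul := mul_lt_mul_of_pos_right hgt hl
    have h1 : Real.tan (k * l - m * π) < Real.tan (y * l - m * π) :=
      Real.strictMonoOn_tan hmemk hmemy (by linarith)
    have : σ < σ := by
      calc σ = 2 * k * Real.tan (k * l - m * π) := hky.1.symm
        _ < 2 * y * Real.tan (y * l - m * π) :=
          mul_lt_mul (by linarith) h1.le htk (by linarith)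
        _ = σ := hyy.1
    exact lt_irrefl σ this

lemma two_star_delta (l σ : ℝ) (hl : 0 < l) (hσ : 0 < σ) (m : ℕ) (k : ℝ)
    (hk : k ∈ Set.Ioo ((m : ℝ) * π / l) ((m : ℝ) * π / l + π / (2 * l)))
    (heq : 2 * k * Real.sin (k * l) = σ * Real.cos (k * l)) :
    k * l - m * π = Real.arctan (σ / (2 * k)) := by
  have hl' : l ≠ 0 := hl.ne'
  have ha0 : (0:ℝ) ≤ (m : ℝ) * π / l := by positivity
  have hk0 : 0 < k := lt_of_le_of_lt ha0 hk.1
  have hx1 : (m : ℝ) * π < k * l := by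
    have := mul_lt_mul_of_pos_right hk.1 hl
    rw [div_mul_cancel₀ _ hl'] at this
    exact this
  have hx2 : k * l < (m : ℝ) * π + π / 2 := by
    have := mul_lt_mul_of_pos_right hk.2 hl
    rw [add_mul, div_mul_cancel₀ _ hl'] at this
    have hc : π / (2*l) * l = π/2 := by field_simp
    linarith
  have ht : k * l - m * π ∈ Set.Ioo 0 (π / 2) := ⟨by linarith, by linarith⟩
  have hcosx : Real.cos (k * l) ≠ 0 := by
    intro hc
    obtain ⟨j, hj⟩ := Real.cos_eq_zero_iff.1 hc
    have hπ : (0:ℝ) < π := Real.pi_pos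
    rw [hj] at hx1 hx2
    have h1 : (2*(m:ℝ)) < 2*(j:ℝ)+1 := by nlinarith
    have h2 : (2*(j:ℝ)+1) < 2*(m:ℝ)+1 := by nlinarith
    have h1' : 2*(m:ℤ) < 2*j+1 := by exact_mod_cast h1
    have h2' : (2*j+1:ℤ) < 2*(m:ℤ)+1 := by exact_mod_cast h2
    omega
  have htan : Real.tan (k * l - m * π) = Real.tan (k * l) := by
    simpa using Real.tan_periodic.sub_int_mul_eq (x := k * l) (m : ℤ)
  have htv : Real.tan (k * l - m * π) = σ / (2 * k) := by
    rw [htan, Real.tan_eq_sin_div_cos]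
    field_simp
    linarith
  rw [← htv, Real.arctan_tan (by linarith [ht.1, Real.pi_pos]) ht.2]

/-- On the 2-star graph with two edges of length `l`, Neumann outer vertices and
δ-coupling of strength `σ` at the center, the Cesàro mean of the eigenvalue gaps
with respect to the Kirchhoff–Neumann eigenvalues `(nπ/(2l))²` equals `σ/(2l)`. -/
theorem two_star_mean_gap (l σ : ℝ) (hl : 0 < l) (hσ : 0 < σ)
    (κ : ℕ → ℝ) (hmono : StrictMono κ)
    (hrange : Set.range κ =
      {k : ℝ | 0 < k ∧ (Real.cos (k * l) = 0 ∨
        2 * k * Real.sin (k * l) = σ * Real.cos (k * l))}) :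
    Tendsto
      (fun N : ℕ => (1 / (N : ℝ)) *
        ∑ n ∈ Finset.range N, (κ n ^ 2 - ((n : ℝ) * π / (2 * l)) ^ 2))
      atTop (nhds (σ / (2 * l))) := by
  have hl' : l ≠ 0 := hl.ne'
  have hπ : (0:ℝ) < π := Real.pi_pos
  choose s hs using fun m => two_star_exu l σ hl hσ m
  have hs1 : ∀ m : ℕ, s m ∈ Set.Ioo ((m : ℝ) * π / l) ((m : ℝ) * π / l + π / (2 * l)) :=
    fun m => (hs m).1.1
  have hs2 : ∀ m : ℕ, 2 * s m * Real.sin (s m * l) = σ * Real.cos (s m * l) :=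
    fun m => (hs m).1.2
  have hu : ∀ m : ℕ, ∀ y, (y ∈ Set.Ioo ((m : ℝ) * π / l) ((m : ℝ) * π / l + π / (2 * l)) ∧
      2 * y * Real.sin (y * l) = σ * Real.cos (y * l)) → y = s m := fun m => (hs m).2
  have hspos : ∀ m : ℕ, 0 < s m := fun m =>
    lt_of_le_of_lt (by positivity) (hs1 m).1
  set e : ℕ → ℝ := fun n => if n % 2 = 0 then s (n / 2) else (n : ℝ) * π / (2 * l) with he
  have heEven : ∀ m : ℕ, e (2 * m) = s m := by
    intro m
    simp only [he]
    rw [if_pos (by omega), Nat.mul_div_cancel_left _ (by norm_num)]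
  have heOdd : ∀ m : ℕ, e (2 * m + 1) = ((2 * m + 1 : ℕ) : ℝ) * π / (2 * l) := by
    intro m
    simp only [he]
    rw [if_neg (by omega)]
  have hodd_eq : ∀ m : ℕ, ((2 * m + 1 : ℕ) : ℝ) * π / (2 * l) = (m : ℝ) * π / l + π / (2 * l) := by
    intro m; push_cast; field_simp
  have hemono : StrictMono e := by
    apply strictMono_nat_of_lt_succ
    intro n
    obtain ⟨m, rfl | rfl⟩ := Nat.even_or_odd' n
    · rw [heEven, heOdd, hodd_eq]
      exact (hs1 m).2
    · have h1 : 2 * m + 1 + 1 = 2 * (m + 1) := by ring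
      rw [heOdd, h1, heEven, hodd_eq]
      have h2 : (m : ℝ) * π / l + π / (2 * l) < ((m + 1 : ℕ) : ℝ) * π / l := by
        push_cast
        rw [div_add_div _ _ hl' (by positivity), div_lt_div_iff₀ (by positivity) hl]
        nlinarith [mul_pos hπ (mul_pos hl hl)]
      exact h2.trans (hs1 (m + 1)).1
  have herange : Set.range e =
      {k : ℝ | 0 < k ∧ (Real.cos (k * l) = 0 ∨
        2 * k * Real.sin (k * l) = σ * Real.cos (k * l))} := by
    apply Set.eq_of_subset_of_subset
    · rintro x ⟨n, rfl⟩
      obtain ⟨m, rfl | rfl⟩ := Nat.even_or_odd' n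
      · rw [heEven]
        exact ⟨hspos m, Or.inr (hs2 m)⟩
      · rw [heOdd]
        constructor
        · positivity
        · left
          rw [Real.cos_eq_zero_iff]
          refine ⟨m, ?_⟩
          push_cast
          field_simp
    · rintro x ⟨hx0, hcase⟩
      by_cases hc : Real.cos (x * l) = 0
      · obtain ⟨j, hj⟩ := Real.cos_eq_zero_iff.1 hc
        have hj0 : 0 ≤ j := by
          by_contra hneg
          push_neg at hneg
          have : (2 * (j:ℝ) + 1) ≤ -1 := by
            have : (j : ℝ) ≤ -1 := by exact_mod_cast (by omega : j ≤ -1)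
            linarith
          have hxl : 0 < x * l := mul_pos hx0 hl
          nlinarith [hj ▸ hxl]
        refine ⟨2 * j.toNat + 1, ?_⟩
        rw [heOdd]
        have h' : ((j.toNat : ℕ) : ℝ) = (j : ℝ) := by
          exact_mod_cast congrArg (Int.cast : ℤ → ℝ) (Int.toNat_of_nonneg hj0)
        have hcast : ((2 * j.toNat + 1 : ℕ) : ℝ) = 2 * (j : ℝ) + 1 := by
          push_cast
          rw [h']
        rw [hcast]
        have : x * l = (2 * (j:ℝ) + 1) * π / 2 := hj
        field_simp
        linarith [this]
      · have heq : 2 * x * Real.sin (x * l) = σ * Real.cos (x * l) := hcase.resolve_left hc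
        set m : ℤ := ⌊x * l / π⌋ with hm
        have hm0 : 0 ≤ m := Int.floor_nonneg.2 (by positivity)
        have hb1 : (m : ℝ) * π ≤ x * l := by
          have h := Int.floor_le (x * l / π)
          have h2 := mul_le_mul_of_nonneg_right h hπ.le
          rwa [div_mul_cancel₀ _ hπ.ne'] at h2
        have hb2 : x * l < ((m : ℝ) + 1) * π := by
          have h := Int.lt_floor_add_one (x * l / π)
          have h2 := mul_lt_mul_of_pos_right h hπ
          rwa [div_mul_cancel₀ _ hπ.ne'] at h2
        -- exclude x * l = m π
        have hb1' : (m : ℝ) * π < x * l := by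
          rcases hb1.lt_or_eq with h | h
          · exact h
          · exfalso
            have hsin : Real.sin (x * l) = 0 := by rw [← h]; exact Real.sin_int_mul_pi m
            rw [hsin, mul_zero] at heq
            exact hc ((mul_eq_zero.1 heq.symm).resolve_left hσ.ne')
        have htanv : Real.tan (x * l) = σ / (2 * x) := by
          rw [Real.tan_eq_sin_div_cos]
          rw [div_eq_div_iff hc (by positivity)]
          linarith
        have htpos : (0:ℝ) < σ / (2 * x) := by positivity
        have hb2' : x * l < (m : ℝ) * π + π / 2 := by
          by_contra hge
          push_neg at hge
          rcases hge.lt_or_eq with hgt | hceq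
          · have htan1 : Real.tan (x * l - m * π) = Real.tan (x * l) := by
              simpa using Real.tan_periodic.sub_int_mul_eq (x := x * l) m
            have htan2 : Real.tan (x * l - m * π - π) = Real.tan (x * l - m * π) :=
              Real.tan_sub_pi _
            have hneg : Real.tan (x * l - m * π - π) < 0 := by
              apply Real.tan_neg_of_neg_of_pi_div_two_lt
              · linarith
              · linarith
            rw [htan2, htan1, htanv] at hneg
            linarith
          · apply hc
            rw [Real.cos_eq_zero_iff]
            exact ⟨m, by rw [← hceq]; ring⟩
        have hxm1 : (m : ℝ) * π / l < x := by rw [div_lt_iff₀ hl]; exact hb1'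
        have hxm2 : x < (m : ℝ) * π / l + π / (2 * l) := by
          have hrw : (m : ℝ) * π / l + π / (2 * l) = ((m:ℝ) * π + π / 2) / l := by
            field_simp
          rw [hrw, lt_div_iff₀ hl]
          exact hb2'
        have hmc : ((m.toNat : ℕ) : ℝ) = (m : ℝ) := by
          exact_mod_cast congrArg (Int.cast : ℤ → ℝ) (Int.toNat_of_nonneg hm0)
        have hxs : x = s m.toNat := by
          apply hu m.toNat x
          rw [hmc]
          exact ⟨⟨hxm1, hxm2⟩, heq⟩
        exact ⟨2 * m.toNat, by rw [heEven]; exact hxs.symm⟩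
  have hκe : κ = e := (hmono.range_inj hemono).1 (hrange.trans herange.symm)
  subst hκe
  -- the even-index gap sequence
  set G : ℕ → ℝ := fun m => s m ^ 2 - ((m : ℝ) * π / l) ^ 2 with hG
  have hstop : Tendsto s atTop atTop := by
    apply tendsto_atTop_mono (fun m => (hs1 m).1.le)
    exact (tendsto_natCast_atTop_atTop.atTop_mul_const hπ).atTop_div_const hl
  set u : ℕ → ℝ := fun m => σ / (2 * s m) with hudef
  have hupos : ∀ m, 0 < u m := fun m => by
    have := hspos m
    simp only [hudef]
    positivity
  have hu0 : Tendsto u atTop (𝓝 0) :=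
    Tendsto.div_atTop tendsto_const_nhds (hstop.const_mul_atTop two_pos)
  have hδ : ∀ m : ℕ, s m * l - m * π = Real.arctan (u m) := fun m =>
    two_star_delta l σ hl hσ m (s m) (hs1 m) (hs2 m)
  have harctan : Tendsto (fun m => Real.arctan (u m) / u m) atTop (𝓝 1) := by
    have hslope := hasDerivAt_iff_tendsto_slope.1 (Real.hasDerivAt_arctan 0)
    norm_num at hslope
    have hcomp : Tendsto u atTop (𝓝[≠] (0:ℝ)) :=
      tendsto_nhdsWithin_of_tendsto_nhds_of_eventually_within _ hu0
        (Eventually.of_forall fun m => (hupos m).ne')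
    apply (hslope.comp hcomp).congr
    intro m
    simp [slope_def_field]
  have hub : ∀ m : ℕ, ((m:ℝ) * π / l) / s m ≤ 1 := fun m =>
    (div_le_one (hspos m)).2 (hs1 m).1.le
  have hlb : ∀ m : ℕ, 1 - (π / (2*l)) / s m ≤ ((m:ℝ) * π / l) / s m := by
    intro m
    have h := (hs1 m).2
    have h2 : s m - π / (2*l) ≤ (m:ℝ) * π / l := by linarith
    calc 1 - (π / (2*l)) / s m = (s m - π / (2*l)) / s m := by
          rw [sub_div, div_self (hspos m).ne']
      _ ≤ ((m:ℝ) * π / l) / s m := (div_le_div_iff_of_pos_right (hspos m)).2 h2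
  have hlow : Tendsto (fun m : ℕ => 1 - (π / (2*l)) / s m) atTop (𝓝 1) := by
    have h0 : Tendsto (fun m : ℕ => (π / (2*l)) / s m) atTop (𝓝 0) :=
      Tendsto.div_atTop tendsto_const_nhds hstop
    simpa using tendsto_const_nhds.sub h0
  have hratio : Tendsto (fun m : ℕ => ((m:ℝ) * π / l) / s m) atTop (𝓝 1) :=
    tendsto_of_tendsto_of_tendsto_of_le_of_le hlow tendsto_const_nhds hlb hub
  have hA : Tendsto (fun m : ℕ => σ/2 * (1 + ((m:ℝ) * π / l) / s m)) atTop
      (𝓝 (σ/2 * (1 + 1))) := (tendsto_const_nhds.add hratio).const_mul _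
  have hGlim : Tendsto G atTop (𝓝 (σ / l)) := by
    have hmul := (hA.mul harctan).div_const l
    rw [show σ/2 * (1+1) * 1 / l = σ / l by ring] at hmul
    apply hmul.congr
    intro m
    have h1 := hδ m
    have hs0 := (hspos m).ne'
    have hu0' := (hupos m).ne'
    have hueq : u m = σ / (2 * s m) := rfl
    rw [← h1, hG]
    simp only [hueq]
    field_simp
    ring
  -- gap values
  have hgapOdd : ∀ m : ℕ, e (2*m+1) ^ 2 - (((2*m+1 : ℕ):ℝ) * π / (2*l))^2 = 0 := by
    intro m; rw [heOdd]; ring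
  have hgapEven : ∀ m : ℕ, e (2*m) ^ 2 - (((2*m : ℕ):ℝ) * π / (2*l))^2 = G m := by
    intro m
    have hc : ((2*m : ℕ):ℝ) * π / (2*l) = (m:ℝ) * π / l := by
      push_cast; field_simp
    rw [heEven, hc]
  have hsum : ∀ N : ℕ, ∑ n ∈ Finset.range N, (e n ^ 2 - ((n:ℝ) * π / (2*l))^2)
      = ∑ m ∈ Finset.range ((N+1)/2), G m := by
    intro N
    induction N with
    | zero => simp
    | succ N ih =>
      rw [Finset.sum_range_succ, ih]
      obtain ⟨m, rfl | rfl⟩ := Nat.even_or_odd' N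
      · have h1 : (2*m+1+1)/2 = m+1 := by omega
        have h2 : (2*m+1)/2 = m := by omega
        rw [h1, h2, Finset.sum_range_succ, hgapEven m]
      · have h1 : (2*m+1+1+1)/2 = m+1 := by omega
        have h2 : (2*m+1+1)/2 = m+1 := by omega
        rw [h1, h2, hgapOdd m, add_zero]
  -- Cesàro assembly
  have hhalf : Tendsto (fun N : ℕ => (N+1)/2) atTop atTop :=
    tendsto_atTop_atTop.2 (fun b => ⟨2*b, fun a ha => by omega⟩)
  have hcomp := hGlim.cesaro.comp hhalf
  have hfrac : Tendsto (fun N : ℕ => (((N+1)/2 : ℕ) : ℝ) / N) atTop (𝓝 (1/2)) := by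
    have hupper : Tendsto (fun N : ℕ => 1/2 + 1/(N:ℝ)) atTop (𝓝 (1/2)) := by
      simpa using (tendsto_const_nhds (x := (1:ℝ)/2)).add tendsto_one_div_atTop_nhds_zero_nat
    apply tendsto_of_tendsto_of_tendsto_of_le_of_le' tendsto_const_nhds hupper
    · filter_upwards [eventually_ge_atTop 1] with N hN
      have hN0 : (0:ℝ) < N := by exact_mod_cast hN
      have hcast : (N:ℝ) ≤ 2 * (((N+1)/2 : ℕ):ℝ) := by
        exact_mod_cast (by omega : N ≤ 2*((N+1)/2))
      rw [le_div_iff₀ hN0]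
      linarith
    · filter_upwards [eventually_ge_atTop 1] with N hN
      have hN0 : (0:ℝ) < N := by exact_mod_cast hN
      have hcast : 2 * (((N+1)/2 : ℕ):ℝ) ≤ (N:ℝ) + 2 := by
        exact_mod_cast (by omega : 2*((N+1)/2) ≤ N + 2)
      rw [div_le_iff₀ hN0]
      have hexp : ((1:ℝ)/2 + 1/N) * N = N/2 + 1 := by field_simp
      rw [hexp]
      linarith
  have hprod := hfrac.mul hcomp
  rw [show (1:ℝ)/2 * (σ/l) = σ / (2*l) by ring] at hprod
  apply hprod.congr
  intro N
  simp only [Function.comp_apply]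
  rw [hsum N]
  rcases Nat.eq_zero_or_pos N with rfl | hN
  · simp
  · have hM : 0 < (N+1)/2 := by omega
    have hMne : (((N+1)/2 : ℕ):ℝ) ≠ 0 := (Nat.cast_pos.2 hM).ne'
    have hNne : ((N:ℝ)) ≠ 0 := (Nat.cast_pos.2 hN).ne'
    field_simp
end

section
/- Let l > 0 and σ > 0, set K_σ := {k > 0 : cos(kl) = 0 or 2k·sin(kl) = σ·cos(kl)}, and suppose κ : ℕ → ℝ is a strictly increasing function whose range is exactly K_σ. Then for every m ∈ ℕ one has κ(2m+1) = (2m+1)π/(2l). In particular the odd-indexed elements of the increasing enumeration of K_σ do not depend on σ and coincide with the corresponding square roots (2m+1)π/(2l) of the Kirchhoff–Neumann eigenvalues, so the corresponding eigenvalue gaps vanish. -/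
open Real Set

noncomputable def tsH (l σ k : ℝ) : ℝ := 2 * k * Real.sin (k * l) - σ * Real.cos (k * l)

lemma ts_e_sq (j : ℕ) : ((-1:ℝ)^j) * ((-1:ℝ)^j) = 1 := by
  rw [← pow_add]; exact Even.neg_one_pow ⟨j, rfl⟩

lemma ts_sign1 (j : ℕ) (x : ℝ) (h1 : (j:ℝ) * π < x) (h2 : x < (j:ℝ) * π + π/2) :
    0 < (-1:ℝ)^j * Real.sin x ∧ 0 < (-1:ℝ)^j * Real.cos x := by
  have hx : x = (x - (j:ℝ)*π) + (j:ℝ)*π := by ring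
  have hs : Real.sin x = (-1:ℝ)^j * Real.sin (x - (j:ℝ)*π) := by
    conv_lhs => rw [hx, Real.sin_add_nat_mul_pi]
  have hc : Real.cos x = (-1:ℝ)^j * Real.cos (x - (j:ℝ)*π) := by
    conv_lhs => rw [hx, Real.cos_add_nat_mul_pi]
  have hpi := Real.pi_pos
  have hsp : 0 < Real.sin (x - (j:ℝ)*π) :=
    Real.sin_pos_of_pos_of_lt_pi (by linarith) (by linarith)
  have hcp : 0 < Real.cos (x - (j:ℝ)*π) :=
    Real.cos_pos_of_mem_Ioo ⟨by linarith, by linarith⟩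
  constructor
  · rw [hs, ← mul_assoc, ts_e_sq]; linarith
  · rw [hc, ← mul_assoc, ts_e_sq]; linarith

lemma ts_sign2 (j : ℕ) (x : ℝ) (h1 : (j:ℝ) * π + π/2 < x) (h2 : x ≤ (j:ℝ) * π + π) :
    0 ≤ (-1:ℝ)^j * Real.sin x ∧ (-1:ℝ)^j * Real.cos x < 0 := by
  have hx : x = (x - (j:ℝ)*π) + (j:ℝ)*π := by ring
  have hs : Real.sin x = (-1:ℝ)^j * Real.sin (x - (j:ℝ)*π) := by
    conv_lhs => rw [hx, Real.sin_add_nat_mul_pi]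
  have hc : Real.cos x = (-1:ℝ)^j * Real.cos (x - (j:ℝ)*π) := by
    conv_lhs => rw [hx, Real.cos_add_nat_mul_pi]
  have hpi := Real.pi_pos
  have hsp : 0 ≤ Real.sin (x - (j:ℝ)*π) :=
    Real.sin_nonneg_of_nonneg_of_le_pi (by linarith) (by linarith)
  have hcp : Real.cos (x - (j:ℝ)*π) < 0 :=
    Real.cos_neg_of_pi_div_two_lt_of_lt (by linarith) (by linarith)
  constructor
  · rw [hs, ← mul_assoc, ts_e_sq]; linarith
  · rw [hc, ← mul_assoc, ts_e_sq]; linarith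

lemma ts_hasDeriv (l σ k : ℝ) :
    HasDerivAt (tsH l σ) ((2 + σ*l) * Real.sin (k*l) + 2*k*l * Real.cos (k*l)) k := by
  have hkl : HasDerivAt (fun x : ℝ => x * l) l k := by
    simpa using (hasDerivAt_id k).mul_const l
  have hu : HasDerivAt (fun x : ℝ => 2*x) 2 k := by
    simpa using (hasDerivAt_id k).const_mul 2
  have hv : HasDerivAt (fun x : ℝ => Real.sin (x*l)) (Real.cos (k*l) * l) k := by
    exact (Real.hasDerivAt_sin (k*l)).comp k hkl
  have hw : HasDerivAt (fun x : ℝ => Real.cos (x*l)) (-Real.sin (k*l) * l) k := by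
    exact (Real.hasDerivAt_cos (k*l)).comp k hkl
  have h2 := hu.mul hv
  have h3 := hw.const_mul σ
  have := h2.sub h3
  refine this.congr_deriv ?_
  ring

lemma ts_cont (l σ : ℝ) : Continuous (tsH l σ) := by
  unfold tsH; continuity

lemma ts_mono (l σ : ℝ) (hl : 0 < l) (hσ : 0 < σ) (j : ℕ) :
    StrictMonoOn (fun k => (-1:ℝ)^j * tsH l σ k)
      (Icc ((j:ℝ)*π/l) ((2*(j:ℝ)+1)*π/(2*l))) := by
  apply strictMonoOn_of_deriv_pos (convex_Icc _ _)
  · exact (continuous_const.mul (ts_cont l σ)).continuousOn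
  · intro k hk
    rw [interior_Icc] at hk
    have hd : HasDerivAt (fun k => (-1:ℝ)^j * tsH l σ k)
        ((-1:ℝ)^j * ((2 + σ*l) * Real.sin (k*l) + 2*k*l * Real.cos (k*l))) k :=
      (ts_hasDeriv l σ k).const_mul _
    rw [hd.deriv]
    have hk0 : 0 < k := lt_of_le_of_lt (by positivity) hk.1
    have hx1 : (j:ℝ)*π < k*l := by
      have := (div_lt_iff₀ hl).mp hk.1; linarith
    have hx2 : k*l < (j:ℝ)*π + π/2 := by
      have := (lt_div_iff₀ (by positivity : (0:ℝ) < 2*l)).mp hk.2; nlinarith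
    obtain ⟨hs, hc⟩ := ts_sign1 j (k*l) hx1 hx2
    have e1 : 0 < (2 + σ*l) * ((-1:ℝ)^j * Real.sin (k*l)) :=
      mul_pos (by nlinarith) hs
    have e2 : 0 < (2*k*l) * ((-1:ℝ)^j * Real.cos (k*l)) :=
      mul_pos (by positivity) hc
    nlinarith

lemma ts_val_a (l σ : ℝ) (hl : 0 < l) (j : ℕ) :
    tsH l σ ((j:ℝ)*π/l) = -σ * (-1:ℝ)^j := by
  have harg : (j:ℝ)*π/l * l = (j:ℝ)*π := div_mul_cancel₀ _ (ne_of_gt hl)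
  have hs : Real.sin ((j:ℝ)*π) = 0 := Real.sin_nat_mul_pi j
  have hc : Real.cos ((j:ℝ)*π) = (-1:ℝ)^j := by
    simpa using Real.cos_add_nat_mul_pi 0 j
  unfold tsH
  rw [harg, hs, hc]; ring

lemma ts_val_b (l σ : ℝ) (hl : 0 < l) (j : ℕ) :
    tsH l σ ((2*(j:ℝ)+1)*π/(2*l)) = 2*((2*(j:ℝ)+1)*π/(2*l)) * (-1:ℝ)^j ∧
    Real.cos (((2*(j:ℝ)+1)*π/(2*l)) * l) = 0 := by
  have harg : (2*(j:ℝ)+1)*π/(2*l) * l = π/2 + (j:ℝ)*π := by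
    field_simp; ring
  have hs : Real.sin (π/2 + (j:ℝ)*π) = (-1:ℝ)^j := by
    rw [Real.sin_add_nat_mul_pi, Real.sin_pi_div_two, mul_one]
  have hc : Real.cos (π/2 + (j:ℝ)*π) = 0 := by
    rw [Real.cos_add_nat_mul_pi, Real.cos_pi_div_two, mul_zero]
  constructor
  · unfold tsH; rw [harg, hs, hc]; ring
  · rw [harg, hc]

lemma ts_exists (l σ : ℝ) (hl : 0 < l) (hσ : 0 < σ) (j : ℕ) :
    ∃ s ∈ Ioo ((j:ℝ)*π/l) ((2*(j:ℝ)+1)*π/(2*l)), tsH l σ s = 0 := by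
  have hpi := Real.pi_pos
  have hab : (j:ℝ)*π/l ≤ (2*(j:ℝ)+1)*π/(2*l) := by
    rw [div_le_div_iff₀ hl (by positivity)]
    have : (0:ℝ) ≤ (j:ℝ) := Nat.cast_nonneg j
    nlinarith
  set g := fun k => (-1:ℝ)^j * tsH l σ k with hg
  have hcg : ContinuousOn g (Icc ((j:ℝ)*π/l) ((2*(j:ℝ)+1)*π/(2*l))) :=
    (continuous_const.mul (ts_cont l σ)).continuousOn
  have hga : g ((j:ℝ)*π/l) = -σ := by
    rw [hg]; simp only []
    rw [ts_val_a l σ hl j]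
    calc (-1:ℝ)^j * (-σ * (-1:ℝ)^j) = -σ * ((-1:ℝ)^j * (-1:ℝ)^j) := by ring
    _ = -σ := by rw [ts_e_sq]; ring
  have hb0 : 0 < (2*(j:ℝ)+1)*π/(2*l) := by positivity
  have hgb : g ((2*(j:ℝ)+1)*π/(2*l)) = 2*((2*(j:ℝ)+1)*π/(2*l)) := by
    rw [hg]; simp only []
    rw [(ts_val_b l σ hl j).1]
    calc (-1:ℝ)^j * (2*((2*(j:ℝ)+1)*π/(2*l)) * (-1:ℝ)^j)
        = 2*((2*(j:ℝ)+1)*π/(2*l)) * ((-1:ℝ)^j * (-1:ℝ)^j) := by ring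
    _ = _ := by rw [ts_e_sq]; ring
  have h0 : (0:ℝ) ∈ Ioo (g ((j:ℝ)*π/l)) (g ((2*(j:ℝ)+1)*π/(2*l))) := by
    rw [hga, hgb]; constructor <;> [linarith; linarith]
  obtain ⟨s, hs, hgs⟩ := intermediate_value_Ioo hab hcg h0
  refine ⟨s, hs, ?_⟩
  have he : ((-1:ℝ)^j) ≠ 0 := by positivity
  rcases mul_eq_zero.mp hgs with h | h
  · exact absurd h he
  · exact h

lemma ts_gap2 (l σ : ℝ) (hl : 0 < l) (hσ : 0 < σ) (j : ℕ) (k : ℝ)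
    (h1 : (2*(j:ℝ)+1)*π/(2*l) < k) (h2 : k ≤ ((j:ℝ)+1)*π/l) :
    Real.cos (k*l) ≠ 0 ∧ tsH l σ k ≠ 0 := by
  have hpi := Real.pi_pos
  have hk0 : 0 < k := lt_of_le_of_lt (by positivity) h1
  have hx1 : (j:ℝ)*π + π/2 < k*l := by
    have := (div_lt_iff₀ (by positivity : (0:ℝ) < 2*l)).mp h1; nlinarith
  have hx2 : k*l ≤ (j:ℝ)*π + π := by
    have := (le_div_iff₀ hl).mp h2; nlinarith
  obtain ⟨hs, hc⟩ := ts_sign2 j (k*l) hx1 hx2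
  have he : ((-1:ℝ)^j) ≠ 0 := by positivity
  constructor
  · intro h; rw [h, mul_zero] at hc; exact lt_irrefl 0 hc
  · intro h
    have hpos : 0 < (-1:ℝ)^j * tsH l σ k := by
      unfold tsH
      have e1 : 0 ≤ 2*k*((-1:ℝ)^j * Real.sin (k*l)) :=
        mul_nonneg (by linarith) hs
      have e2 : σ*((-1:ℝ)^j * Real.cos (k*l)) < 0 :=
        mul_neg_of_pos_of_neg hσ hc
      nlinarith
    rw [h, mul_zero] at hpos; exact lt_irrefl 0 hpos

/-- In the open interval `(jπ/l, (2j+1)π/(2l))`, any point satisfying the secular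
equation equals the unique root `s` of `tsH`. -/
lemma ts_only_root (l σ : ℝ) (hl : 0 < l) (hσ : 0 < σ) (j : ℕ) {s z : ℝ}
    (hs : s ∈ Ioo ((j:ℝ)*π/l) ((2*(j:ℝ)+1)*π/(2*l))) (hs0 : tsH l σ s = 0)
    (hz : z ∈ Ioo ((j:ℝ)*π/l) ((2*(j:ℝ)+1)*π/(2*l)))
    (hzS : Real.cos (z*l) = 0 ∨ 2*z*Real.sin (z*l) = σ*Real.cos (z*l)) : z = s := by
  have hx1 : (j:ℝ)*π < z*l := by
    have := (div_lt_iff₀ hl).mp hz.1; linarith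
  have hx2 : z*l < (j:ℝ)*π + π/2 := by
    have := (lt_div_iff₀ (by positivity : (0:ℝ) < 2*l)).mp hz.2; nlinarith
  obtain ⟨-, hc⟩ := ts_sign1 j (z*l) hx1 hx2
  have hcne : Real.cos (z*l) ≠ 0 := by
    intro h; rw [h, mul_zero] at hc; exact lt_irrefl 0 hc
  have hz0 : tsH l σ z = 0 := by
    rcases hzS with h | h
    · exact absurd h hcne
    · unfold tsH; rw [h]; ring
  have := (ts_mono l σ hl hσ j).injOn (Ioo_subset_Icc_self hz)
    (Ioo_subset_Icc_self hs) (by simp [hz0, hs0])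
  exact this

lemma enum_zero {κ : ℕ → ℝ} (hmono : StrictMono κ) {S : Set ℝ}
    (hrange : Set.range κ = S) {x : ℝ} (hx : x ∈ S) (hmin : ∀ y ∈ S, x ≤ y) :
    κ 0 = x := by
  have hx' : x ∈ Set.range κ := hrange ▸ hx
  obtain ⟨j, hj⟩ := hx'
  have h0 : κ 0 ∈ S := hrange ▸ Set.mem_range_self 0
  exact le_antisymm (hj ▸ hmono.monotone (Nat.zero_le j)) (hmin _ h0)

lemma enum_succ {κ : ℕ → ℝ} (hmono : StrictMono κ) {S : Set ℝ}
    (hrange : Set.range κ = S) {i : ℕ} {x y : ℝ} (hx : κ i = x) (hy : y ∈ S)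
    (hxy : x < y) (hgap : ∀ z ∈ S, x < z → y ≤ z) : κ (i+1) = y := by
  have hy' : y ∈ Set.range κ := hrange ▸ hy
  obtain ⟨j, hj⟩ := hy'
  have hij : i < j := hmono.lt_iff_lt.mp (by rw [hx, hj]; exact hxy)
  have h1 : κ (i+1) ≤ y := hj ▸ hmono.monotone hij
  have h2 : κ (i+1) ∈ S := hrange ▸ Set.mem_range_self _
  have h3 : x < κ (i+1) := hx ▸ hmono (Nat.lt_succ_self i)
  exact le_antisymm h1 (hgap _ h2 h3)

/-- The odd-indexed elements of the increasing enumeration of the square roots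
of the δ-coupled 2-star eigenvalues are `(2m+1)π/(2l)`, independent of `σ`. -/
theorem two_star_odd_modes (l σ : ℝ) (hl : 0 < l) (hσ : 0 < σ)
    (κ : ℕ → ℝ) (hmono : StrictMono κ)
    (hrange : Set.range κ =
      {k : ℝ | 0 < k ∧ (Real.cos (k * l) = 0 ∨
        2 * k * Real.sin (k * l) = σ * Real.cos (k * l))}) :
    ∀ m : ℕ, κ (2 * m + 1) = (2 * (m : ℝ) + 1) * π / (2 * l) := by
  have hpi := Real.pi_pos
  set S : Set ℝ := {k : ℝ | 0 < k ∧ (Real.cos (k * l) = 0 ∨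
      2 * k * Real.sin (k * l) = σ * Real.cos (k * l))} with hS
  have hmemS : ∀ z ∈ S, 0 < z ∧ (Real.cos (z*l) = 0 ∨
      2*z*Real.sin (z*l) = σ*Real.cos (z*l)) := fun z hz => hz
  -- membership of cosine zeros
  have hbS : ∀ j : ℕ, (2*(j:ℝ)+1)*π/(2*l) ∈ S := by
    intro j
    refine ⟨by positivity, Or.inl (ts_val_b l σ hl j).2⟩
  -- membership of δ-roots
  have hsS : ∀ (j : ℕ) (s : ℝ), s ∈ Ioo ((j:ℝ)*π/l) ((2*(j:ℝ)+1)*π/(2*l)) →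
      tsH l σ s = 0 → s ∈ S := by
    intro j s hs hs0
    refine ⟨lt_of_le_of_lt (by positivity) hs.1, Or.inr ?_⟩
    have : 2*s*Real.sin (s*l) - σ*Real.cos (s*l) = 0 := hs0
    linarith
  -- after an even-index root, the next element is the cosine zero
  have odd_step : ∀ (j n : ℕ), κ n ∈ Ioo ((j:ℝ)*π/l) ((2*(j:ℝ)+1)*π/(2*l)) →
      tsH l σ (κ n) = 0 → κ (n+1) = (2*(j:ℝ)+1)*π/(2*l) := by
    intro j n hmem h0
    refine enum_succ hmono hrange rfl (hbS j) hmem.2 ?_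
    intro z hz hz1
    by_contra hz2
    push_neg at hz2
    have hzmem : z ∈ Ioo ((j:ℝ)*π/l) ((2*(j:ℝ)+1)*π/(2*l)) :=
      ⟨lt_trans hmem.1 hz1, hz2⟩
    have := ts_only_root l σ hl hσ j hmem h0 hzmem (hmemS z hz).2
    exact absurd this (by rintro rfl; exact lt_irrefl _ hz1)
  -- main induction
  suffices h : ∀ m : ℕ, (κ (2*m) ∈ Ioo ((m:ℝ)*π/l) ((2*(m:ℝ)+1)*π/(2*l)) ∧
      tsH l σ (κ (2*m)) = 0) ∧ κ (2*m+1) = (2*(m:ℝ)+1)*π/(2*l) by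
    exact fun m => (h m).2
  intro m
  induction m with
  | zero =>
    obtain ⟨s, hs, hs0⟩ := ts_exists l σ hl hσ 0
    have ha0 : ((0:ℕ):ℝ)*π/l = 0 := by norm_num
    have h0 : κ 0 = s := by
      refine enum_zero hmono hrange (hsS 0 s hs hs0) ?_
      intro y hy
      by_contra hlt
      push_neg at hlt
      have hymem : y ∈ Ioo (((0:ℕ):ℝ)*π/l) ((2*((0:ℕ):ℝ)+1)*π/(2*l)) :=
        ⟨by rw [ha0]; exact (hmemS y hy).1, hlt.trans hs.2⟩
      have := ts_only_root l σ hl hσ 0 hs hs0 hymem (hmemS y hy).2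
      exact absurd this (by rintro rfl; exact lt_irrefl _ hlt)
    have hmem0 : κ (2*0) ∈ Ioo (((0:ℕ):ℝ)*π/l) ((2*((0:ℕ):ℝ)+1)*π/(2*l)) := by
      rw [show 2*0 = 0 from rfl, h0]; exact hs
    have hH0 : tsH l σ (κ (2*0)) = 0 := by
      rw [show 2*0 = 0 from rfl, h0]; exact hs0
    exact ⟨⟨hmem0, hH0⟩, odd_step 0 (2*0) hmem0 hH0⟩
  | succ m ih =>
    obtain ⟨⟨hmem, hH⟩, hodd⟩ := ih
    obtain ⟨s, hs, hs0⟩ := ts_exists l σ hl hσ (m+1)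
    have hcast : ((m+1:ℕ):ℝ) = (m:ℝ)+1 := by push_cast; ring
    have hba : (2*(m:ℝ)+1)*π/(2*l) < ((m+1:ℕ):ℝ)*π/l := by
      rw [hcast, div_lt_div_iff₀ (by positivity) hl]
      nlinarith
    have hbs : (2*(m:ℝ)+1)*π/(2*l) < s := hba.trans hs.1
    have hgap : ∀ z ∈ S, (2*(m:ℝ)+1)*π/(2*l) < z → s ≤ z := by
      intro z hz hz1
      by_contra hz2
      push_neg at hz2
      rcases le_or_gt z (((m+1:ℕ):ℝ)*π/l) with hle | hgt
      · have h2 := ts_gap2 l σ hl hσ m z hz1 (by rw [hcast] at hle; exact hle)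
        rcases (hmemS z hz).2 with h | h
        · exact h2.1 h
        · exact h2.2 (by unfold tsH; rw [h]; ring)
      · have hzmem : z ∈ Ioo (((m+1:ℕ):ℝ)*π/l) ((2*((m+1:ℕ):ℝ)+1)*π/(2*l)) :=
          ⟨hgt, hz2.trans hs.2⟩
        have := ts_only_root l σ hl hσ (m+1) hs hs0 hzmem (hmemS z hz).2
        exact absurd this (by rintro rfl; exact lt_irrefl _ hz2)
    have hE1 : κ (2*(m+1)) = s := by
      rw [show 2*(m+1) = (2*m+1)+1 from by ring]
      exact enum_succ hmono hrange hodd (hsS (m+1) s hs hs0) hbs hgap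
    have hmem1 : κ (2*(m+1)) ∈ Ioo (((m+1:ℕ):ℝ)*π/l) ((2*((m+1:ℕ):ℝ)+1)*π/(2*l)) := by
      rw [hE1]; exact hs
    have hH1 : tsH l σ (κ (2*(m+1))) = 0 := by rw [hE1]; exact hs0
    exact ⟨⟨hmem1, hH1⟩, odd_step (m+1) (2*(m+1)) hmem1 hH1⟩
end

section
/- Let L > 0 and σ > 0, and for each n ∈ ℕ let k_n be the unique solution k ∈ (nπ/L, (n+1/2)π/L) of k·sin(kL) = σ·cos(kL). Then for every n ∈ ℕ one has 0 < k_n² − (nπ/L)² ≤ 2σ/L. In particular the eigenvalue gaps d_n(σ) = k_n² − (nπ/L)² are positive and uniformly bounded in n. -/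
open Real Filter

/-- Uniform bounds for the single-edge Robin–Neumann gaps:
`0 < kₙ² − (nπ/L)² ≤ 2σ/L` for all `n`. -/
theorem robin_neumann_gap_bounds (L σ : ℝ) (hL : 0 < L) (hσ : 0 < σ)
    (k : ℕ → ℝ)
    (hk : ∀ n : ℕ, k n ∈ Set.Ioo ((n : ℝ) * π / L) (((n : ℝ) + 1 / 2) * π / L) ∧
      k n * Real.sin (k n * L) = σ * Real.cos (k n * L)) :
    ∀ n : ℕ, 0 < k n ^ 2 - ((n : ℝ) * π / L) ^ 2 ∧
      k n ^ 2 - ((n : ℝ) * π / L) ^ 2 ≤ 2 * σ / L := by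
  intro n
  obtain ⟨⟨h1, h2⟩, heq⟩ := hk n
  have hπ := Real.pi_pos
  have hn0 : (0:ℝ) ≤ (n : ℝ) * π / L := by positivity
  have hkpos : 0 < k n := lt_of_le_of_lt hn0 h1
  -- work with t = k n * L - n π ∈ (0, π/2)
  set t : ℝ := k n * L - (n : ℝ) * π with htdef
  have hl : (n : ℝ) * π < k n * L := (div_lt_iff₀ hL).mp h1
  have hr : k n * L < ((n : ℝ) + 1 / 2) * π := (lt_div_iff₀ hL).mp h2
  have ht0 : 0 < t := by simp [htdef]; linarith
  have ht2 : t < π / 2 := by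
    have : ((n : ℝ) + 1 / 2) * π = (n : ℝ) * π + π / 2 := by ring
    simp only [htdef]; linarith [this ▸ hr]
  have hcost : 0 < Real.cos t := Real.cos_pos_of_mem_Ioo ⟨by linarith, ht2⟩
  -- rewrite the transcendental equation using the shift
  have hkl : k n * L = t + (n : ℝ) * π := by ring
  have heq' : k n * Real.sin t = σ * Real.cos t := by
    rw [hkl, Real.sin_add_nat_mul_pi, Real.cos_add_nat_mul_pi] at heq
    have hne : ((-1 : ℝ)) ^ n ≠ 0 := by positivity
    refine mul_left_cancel₀ hne ?_
    linear_combination heq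
  -- k t < σ since t < tan t
  have htan : t < Real.tan t := Real.lt_tan ht0 ht2
  have hkt : k n * t < σ := by
    have h3 : k n * t < k n * Real.tan t := by
      exact mul_lt_mul_of_pos_left htan hkpos
    have h4 : k n * Real.tan t = σ := by
      rw [Real.tan_eq_sin_div_cos]
      field_simp
      linarith [heq']
    linarith
  -- conclude
  have hnp : (n : ℝ) * π / L = k n - t / L := by
    field_simp [htdef]
    rw [htdef]; ring
  constructor
  · have := pow_lt_pow_left₀ h1 hn0 (n := 2) two_ne_zero
    linarith
  · rw [hnp]
    have h2kt : k n * t / L < σ / L := (div_lt_div_iff_of_pos_right hL).mpr hkt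
    have hu : k n * (t / L) = k n * t / L := (mul_div_assoc _ _ _).symm
    have expand : k n ^ 2 - (k n - t / L) ^ 2 = 2 * (k n * (t / L)) - (t / L) ^ 2 := by
      ring
    rw [expand, hu]
    have : 2 * σ / L = 2 * (σ / L) := by ring
    rw [this]
    nlinarith [sq_nonneg (t / L), h2kt]
end

section
/- Let L > 0 and σ > 0, and for each n ∈ ℕ let k_n be the unique solution k ∈ (nπ/L, (n+1/2)π/L) of k·sin(kL) = σ·cos(kL). Then lim_{n→∞} ( k_n² − (nπ/L)² ) = 2σ/L. -/
open Real Filter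

/-- The single-edge Robin–Neumann eigenvalue gaps converge: `kₙ² − (nπ/L)² → 2σ/L`. -/
theorem robin_neumann_gap_limit (L σ : ℝ) (hL : 0 < L) (hσ : 0 < σ)
    (k : ℕ → ℝ)
    (hk : ∀ n : ℕ, k n ∈ Set.Ioo ((n : ℝ) * π / L) (((n : ℝ) + 1 / 2) * π / L) ∧
      k n * Real.sin (k n * L) = σ * Real.cos (k n * L)) :
    Tendsto (fun n : ℕ => k n ^ 2 - ((n : ℝ) * π / L) ^ 2) atTop (nhds (2 * σ / L)) := by
  have hkpos : ∀ n, 0 < k n := fun n => by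
    have h1 := (hk n).1.1
    have h0 : (0:ℝ) ≤ (n : ℝ) * π / L :=
      div_nonneg (mul_nonneg (Nat.cast_nonneg n) pi_pos.le) hL.le
    linarith
  set θ : ℕ → ℝ := fun n => k n * L - n * π with hθdef
  clear_value θ
  have hθ0 : ∀ n, 0 < θ n := fun n => by
    have h1 := (hk n).1.1
    rw [div_lt_iff₀ hL] at h1
    simp only [hθdef]; linarith
  have hθhalf : ∀ n, θ n < π / 2 := fun n => by
    have h2 := (hk n).1.2
    rw [lt_div_iff₀ hL] at h2
    simp only [hθdef]; nlinarith
  have hcos : ∀ n, 0 < Real.cos (θ n) := fun n =>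
    Real.cos_pos_of_mem_Ioo ⟨by nlinarith [hθ0 n, pi_pos], hθhalf n⟩
  have htan : ∀ n, Real.tan (θ n) = σ / k n := fun n => by
    have hkl : k n * L = θ n + (n : ℤ) * π := by rw [hθdef]; push_cast; ring
    have heq := (hk n).2
    rw [hkl, Real.sin_add_int_mul_pi, Real.cos_add_int_mul_pi] at heq
    have hne : ((-1 : ℝ)) ^ (n : ℤ) ≠ 0 := by
      apply zpow_ne_zero; norm_num
    have heq2 : k n * Real.sin (θ n) = σ * Real.cos (θ n) := by
      refine mul_left_cancel₀ hne ?_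
      linear_combination heq
    rw [Real.tan_eq_sin_div_cos]
    rw [div_eq_div_iff (hcos n).ne' (hkpos n).ne']
    linarith [heq2]
  have hθeq : ∀ n, θ n = Real.arctan (σ / k n) := fun n => by
    rw [← htan n, Real.arctan_tan (by nlinarith [hθ0 n, pi_pos]) (hθhalf n)]
  have htendk : Tendsto k atTop atTop := by
    refine tendsto_atTop_mono (fun n => ((hk n).1.1).le) ?_
    have : Tendsto (fun n : ℕ => (n : ℝ)) atTop atTop := tendsto_natCast_atTop_atTop
    exact this.atTop_mul_const (div_pos pi_pos hL) |>.congr (fun n => by ring)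
  have ha : Tendsto (fun n => σ / k n) atTop (nhds 0) := by
    have := htendk.inv_tendsto_atTop
    have h2 := this.const_mul σ
    simpa [div_eq_mul_inv] using h2
  have ha' : Tendsto (fun n => σ / k n) atTop (nhdsWithin 0 {x : ℝ | x ≠ 0}) := by
    rw [tendsto_nhdsWithin_iff]
    exact ⟨ha, Eventually.of_forall fun n => div_ne_zero hσ.ne' (hkpos n).ne'⟩
  have harc : Tendsto (fun x : ℝ => Real.arctan x / x) (nhdsWithin 0 {x : ℝ | x ≠ 0})
      (nhds 1) := by
    have h := hasDerivAt_iff_tendsto_slope.mp (Real.hasDerivAt_arctan 0)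
    simp only [slope_fun_def_field, Real.arctan_zero] at h
    have h1 : (1 : ℝ) / (1 + 0 ^ 2) = 1 := by norm_num
    rw [h1] at h
    refine h.congr fun x => by simp [slope_def_field, div_eq_div_iff]
  have hθk : Tendsto (fun n => θ n * k n) atTop (nhds σ) := by
    have h := (harc.comp ha').const_mul σ
    have heq : ∀ n, σ * ((fun x : ℝ => Real.arctan x / x) ∘ (fun n => σ / k n)) n
        = θ n * k n := fun n => by
      simp only [Function.comp_apply, ← hθeq n]
      rw [div_div_eq_mul_div, mul_div_assoc', mul_comm σ (θ n * k n),
        mul_div_assoc, div_self hσ.ne', mul_one]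
    have h2 : Tendsto (fun n => θ n * k n) atTop (nhds (σ * 1)) := Tendsto.congr heq h
    simpa using h2
  have hr : Tendsto (fun n : ℕ => ((n : ℝ) * π / L) / k n) atTop (nhds 1) := by
    have hlow : Tendsto (fun n : ℕ => (n : ℝ) / ((n : ℝ) + 1 / 2)) atTop (nhds 1) :=
      tendsto_natCast_div_add_atTop (1 / 2 : ℝ)
    refine tendsto_of_tendsto_of_tendsto_of_le_of_le' hlow tendsto_const_nhds ?_ ?_
    · filter_upwards with n
      obtain ⟨h1, h2⟩ := (hk n).1
      have hd : (0:ℝ) < (n : ℝ) + 1 / 2 := by positivity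
      rw [div_le_div_iff₀ hd (hkpos n)]
      have h2' : k n * L < ((n : ℝ) + 1 / 2) * π := by
        rw [lt_div_iff₀ hL] at h2; linarith
      rw [div_mul_eq_mul_div, le_div_iff₀ hL]
      nlinarith [mul_le_mul_of_nonneg_left h2'.le (Nat.cast_nonneg (α := ℝ) n)]
    · filter_upwards with n
      exact div_le_one_of_le₀ ((hk n).1.1.le) (hkpos n).le
  have hθm : Tendsto (fun n => θ n * ((n : ℝ) * π / L)) atTop (nhds σ) := by
    have h : Tendsto (fun n => θ n * k n * (((n : ℝ) * π / L) / k n)) atTop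
        (nhds (σ * 1)) := hθk.mul hr
    rw [mul_one] at h
    refine h.congr fun n => ?_
    field_simp [(hkpos n).ne']
  have hfinal := (hθk.add hθm).div_const L
  have heq2 : ∀ n, (θ n * k n + θ n * ((n : ℝ) * π / L)) / L
      = k n ^ 2 - ((n : ℝ) * π / L) ^ 2 := fun n => by
    simp only [hθdef]
    field_simp
    ring
  have h3 : (σ + σ) / L = 2 * σ / L := by ring
  rw [← h3]
  exact hfinal.congr heq2
end

section
/- Let L > 0 and n ∈ ℕ, and let K : (0,∞) → ℝ be a function such that for every σ > 0, K(σ) ∈ (nπ/L, (n+1/2)π/L) and K(σ)·sin(K(σ)·L) = σ·cos(K(σ)·L). Then K is differentiable on (0,∞) and for every σ > 0 the map σ ↦ K(σ)² has derivative cos²(K(σ)L) / ( L/2 + sin(2·K(σ)·L)/(4·K(σ)) ). -/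
open Real

/-- Hadamard/Feynman–Hellmann formula for the single-edge Robin eigenvalue
branch: the branch `σ ↦ K(σ)` is differentiable on `(0,∞)` and
`d(K(σ)²)/dσ = cos²(K(σ)L) / (L/2 + sin(2K(σ)L)/(4K(σ)))`. -/
theorem robin_branch_derivative (L : ℝ) (hL : 0 < L) (n : ℕ) (K : ℝ → ℝ)
    (hK : ∀ σ : ℝ, 0 < σ →
      K σ ∈ Set.Ioo ((n : ℝ) * π / L) (((n : ℝ) + 1 / 2) * π / L) ∧
      K σ * Real.sin (K σ * L) = σ * Real.cos (K σ * L)) :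
    ∀ σ : ℝ, 0 < σ → DifferentiableAt ℝ K σ ∧
      HasDerivAt (fun s => K s ^ 2)
        (Real.cos (K σ * L) ^ 2 / (L / 2 + Real.sin (2 * K σ * L) / (4 * K σ))) σ := by
  set a : ℝ := (n : ℝ) * π / L with ha
  set b : ℝ := ((n : ℝ) + 1 / 2) * π / L with hb
  set F : ℝ → ℝ := fun k => k * Real.tan (k * L) with hF
  -- basic facts on the window
  have key : ∀ k ∈ Set.Ioo a b, 0 < k ∧ Real.cos (k * L) ≠ 0 ∧ 0 < Real.tan (k * L) := by
    intro k hk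
    obtain ⟨hk1, hk2⟩ := hk
    have hπ := Real.pi_pos
    have ha0 : 0 ≤ a := by positivity
    have hk0 : 0 < k := lt_of_le_of_lt ha0 hk1
    set θ : ℝ := k * L - (n : ℝ) * π with hθ
    have hθ1 : 0 < θ := by
      have : (n : ℝ) * π < k * L := by
        have := (div_lt_iff₀ hL).mp hk1
        linarith
      simp [hθ]; linarith
    have hθ2 : θ < π / 2 := by
      have : k * L < ((n : ℝ) + 1 / 2) * π := by
        have := (lt_div_iff₀ hL).mp hk2
        linarith
      simp [hθ]; nlinarith
    have hkL : k * L = θ + (n : ℝ) * π := by rw [hθ]; ring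
    have htan : Real.tan (k * L) = Real.tan θ := by
      rw [hkL, (Real.tan_periodic.nat_mul n) θ]
    have hcosθ : 0 < Real.cos θ := Real.cos_pos_of_mem_Ioo ⟨by linarith, hθ2⟩
    have hcos : Real.cos (k * L) = (-1 : ℝ) ^ n * Real.cos θ := by
      rw [hkL, Real.cos_antiperiodic.add_nat_mul_eq]
    refine ⟨hk0, ?_, ?_⟩
    · rw [hcos]
      exact mul_ne_zero (by positivity) hcosθ.ne'
    · rw [htan]
      exact Real.tan_pos_of_pos_of_lt_pi_div_two hθ1 hθ2
  -- derivative of F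
  have hderiv : ∀ k ∈ Set.Ioo a b,
      HasDerivAt F (Real.tan (k * L) + k * (1 / Real.cos (k * L) ^ 2 * L)) k := by
    intro k hk
    obtain ⟨hk0, hcos, htan⟩ := key k hk
    have h1 : HasDerivAt (fun x : ℝ => x * L) L k := by
      simpa using (hasDerivAt_id k).mul_const L
    have h2 : HasDerivAt (fun x : ℝ => Real.tan (x * L)) (1 / Real.cos (k * L) ^ 2 * L) k :=
      by have := (Real.hasDerivAt_tan hcos).comp k h1; exact this
    exact ((hasDerivAt_id' k).mul h2).congr_deriv (by ring)
  have hF'pos : ∀ k ∈ Set.Ioo a b,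
      0 < Real.tan (k * L) + k * (1 / Real.cos (k * L) ^ 2 * L) := by
    intro k hk
    obtain ⟨hk0, hcos, htan⟩ := key k hk
    have : 0 < 1 / Real.cos (k * L) ^ 2 := by positivity
    positivity
  have hmono : StrictMonoOn F (Set.Ioo a b) := by
    refine strictMonoOn_of_deriv_pos (convex_Ioo a b)
      (fun k hk => (hderiv k hk).continuousAt.continuousWithinAt) (fun k hk => ?_)
    rw [interior_Ioo] at hk
    rw [(hderiv k hk).deriv]
    exact hF'pos k hk
  have hFeq : ∀ y : ℝ, 0 < y → F (K y) = y := by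
    intro y hy
    obtain ⟨hkI, heq⟩ := hK y hy
    obtain ⟨hk0, hcos, htan⟩ := key (K y) hkI
    simp only [hF, Real.tan_eq_sin_div_cos]
    field_simp
    linarith [heq]
  have hFpos : ∀ k ∈ Set.Ioo a b, 0 < F k := by
    intro k hk
    obtain ⟨hk0, hcos, htan⟩ := key k hk
    exact mul_pos hk0 htan
  intro σ hσ
  obtain ⟨hkI, heq⟩ := hK σ hσ
  obtain ⟨hk0, hcos, htan⟩ := key (K σ) hkI
  have hFσ : F (K σ) = σ := hFeq σ hσ
  -- continuity of K at σ
  have hcont : ContinuousAt K σ := by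
    rw [Metric.continuousAt_iff]
    intro ε hε
    set k := K σ with hkdef
    have hka := hkI.1
    have hkb := hkI.2
    set ε' : ℝ := min (ε / 2) (min ((k - a) / 2) ((b - k) / 2)) with hε'def
    have hε'pos : 0 < ε' := by
      simp only [hε'def, lt_min_iff]
      exact ⟨by linarith, by linarith, by linarith⟩
    have hε'1 : ε' ≤ ε / 2 := min_le_left _ _
    have hε'2 : ε' ≤ (k - a) / 2 := le_trans (min_le_right _ _) (min_le_left _ _)
    have hε'3 : ε' ≤ (b - k) / 2 := le_trans (min_le_right _ _) (min_le_right _ _)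
    have hk1I : k - ε' ∈ Set.Ioo a b := ⟨by linarith, by linarith⟩
    have hk2I : k + ε' ∈ Set.Ioo a b := ⟨by linarith, by linarith⟩
    have h1 : F (k - ε') < σ := by
      rw [← hFσ]; exact hmono hk1I hkI (by linarith)
    have h2 : σ < F (k + ε') := by
      rw [← hFσ]; exact hmono hkI hk2I (by linarith)
    refine ⟨min (σ - F (k - ε')) (F (k + ε') - σ), by simp [h1, h2], ?_⟩
    intro y hy
    rw [Real.dist_eq, lt_min_iff] at hy
    obtain ⟨hy1, hy2⟩ := hy
    rw [abs_lt] at hy1 hy2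
    have hy0 : 0 < y := lt_of_lt_of_le (lt_of_lt_of_le (hFpos _ hk1I) (by linarith)) le_rfl
    obtain ⟨hyI, -⟩ := hK y hy0
    have hFy : F (K y) = y := hFeq y hy0
    have hlt1 : k - ε' < K y := by
      by_contra h
      push_neg at h
      have := hmono.monotoneOn hyI hk1I h
      rw [hFy] at this
      linarith
    have hlt2 : K y < k + ε' := by
      by_contra h
      push_neg at h
      have := hmono.monotoneOn hk2I hyI h
      rw [hFy] at this
      linarith
    rw [Real.dist_eq, abs_lt]
    exact ⟨by linarith, by linarith⟩
  -- apply the inverse function theorem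
  have hne : Real.tan (K σ * L) + K σ * (1 / Real.cos (K σ * L) ^ 2 * L) ≠ 0 :=
    (hF'pos _ hkI).ne'
  have hKd : HasDerivAt K (Real.tan (K σ * L) + K σ * (1 / Real.cos (K σ * L) ^ 2 * L))⁻¹ σ := by
    refine HasDerivAt.of_local_left_inverse hcont (hderiv _ hkI) hne ?_
    filter_upwards [isOpen_Ioi.eventually_mem (show σ ∈ Set.Ioi 0 from hσ)] with y hy
    exact hFeq y hy
  refine ⟨hKd.differentiableAt, ?_⟩
  have h2' : HasDerivAt (fun s => K s ^ 2)
      (2 * K σ * (Real.tan (K σ * L) + K σ * (1 / Real.cos (K σ * L) ^ 2 * L))⁻¹) σ := by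
    exact (hKd.pow 2).congr_deriv (by norm_num)
  have hval : Real.cos (K σ * L) ^ 2 / (L / 2 + Real.sin (2 * K σ * L) / (4 * K σ))
      = 2 * K σ * (Real.tan (K σ * L) + K σ * (1 / Real.cos (K σ * L) ^ 2 * L))⁻¹ := by
    have hsin2 : Real.sin (2 * K σ * L) = 2 * Real.sin (K σ * L) * Real.cos (K σ * L) := by
      rw [show 2 * K σ * L = 2 * (K σ * L) by ring, Real.sin_two_mul]
    rw [Real.tan_eq_sin_div_cos] at htan
    rw [hsin2, Real.tan_eq_sin_div_cos]
    set k := K σ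
    set c := Real.cos (k * L)
    set s := Real.sin (k * L)
    have hdenpos : 0 < k * L + s * c := by
      have hsc : 0 < s / c * c ^ 2 := mul_pos htan (by positivity)
      have hsc' : s / c * c ^ 2 = s * c := by field_simp
      nlinarith [mul_pos hk0 hL]
    have e1 : L / 2 + 2 * s * c / (4 * k) = (k * L + s * c) / (2 * k) := by
      field_simp; ring
    have e2 : s / c + k * (1 / c ^ 2 * L) = (s * c + k * L) / c ^ 2 := by
      field_simp
    rw [e1, e2, inv_div]
    rw [div_div_eq_mul_div]
    rw [show s * c + k * L = k * L + s * c by ring]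
    field_simp
  rw [hval]
  exact h2'
end

section
/- Let L > 0 and n ∈ ℕ. If 0 < σ₁ < σ₂, and k₁ ∈ (nπ/L, (n+1/2)π/L) satisfies k₁·sin(k₁L) = σ₁·cos(k₁L) while k₂ ∈ (nπ/L, (n+1/2)π/L) satisfies k₂·sin(k₂L) = σ₂·cos(k₂L), then k₁ < k₂. -/
open Real

lemma aux_robin (L : ℝ) (hL : 0 < L) (n : ℕ) (k : ℝ)
    (hk : k ∈ Set.Ioo ((n : ℝ) * π / L) (((n : ℝ) + 1 / 2) * π / L)) :
    0 < k ∧ k * L - n * π ∈ Set.Ioo (0 : ℝ) (π / 2) ∧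
      Real.tan (k * L) = Real.tan (k * L - n * π) := by
  have hπ := Real.pi_pos
  have h1 : (n : ℝ) * π / L < k := hk.1
  have h2 : k <  0 + ((n : ℝ) + 1 / 2) * π / L := by simpa using hk.2
  have hk0 : 0 < k := lt_of_le_of_lt (by positivity) h1
  have hlb : (n : ℝ) * π < k * L := by
    rw [div_lt_iff₀ hL] at h1; linarith
  have hub : k * L < (n : ℝ) * π + π / 2 := by
    have := hk.2
    rw [lt_div_iff₀ hL] at this
    nlinarith
  refine ⟨hk0, ⟨by linarith, by linarith⟩, ?_⟩
  have := (Real.tan_periodic.nat_mul n) (k * L - n * π)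
  simpa [sub_add_cancel] using this

/-- Strict monotonicity of the Robin eigenvalue branch in the coupling strength:
in each window `(nπ/L, (n+1/2)π/L)`, larger `σ` gives a larger secular root. -/
theorem robin_branch_monotone (L : ℝ) (hL : 0 < L) (n : ℕ)
    (σ₁ σ₂ k₁ k₂ : ℝ) (hσ₁ : 0 < σ₁) (hσ₁₂ : σ₁ < σ₂)
    (hk₁ : k₁ ∈ Set.Ioo ((n : ℝ) * π / L) (((n : ℝ) + 1 / 2) * π / L))
    (hsec₁ : k₁ * Real.sin (k₁ * L) = σ₁ * Real.cos (k₁ * L))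
    (hk₂ : k₂ ∈ Set.Ioo ((n : ℝ) * π / L) (((n : ℝ) + 1 / 2) * π / L))
    (hsec₂ : k₂ * Real.sin (k₂ * L) = σ₂ * Real.cos (k₂ * L)) :
    k₁ < k₂ := by
  have hπ := Real.pi_pos
  obtain ⟨hk01, hx1, ht1⟩ := aux_robin L hL n k₁ hk₁
  obtain ⟨hk02, hx2, ht2⟩ := aux_robin L hL n k₂ hk₂
  -- cos (kᵢ L) ≠ 0
  have hcos : ∀ k σ, 0 < k → 0 < σ → k * Real.sin (k * L) = σ * Real.cos (k * L) →
      Real.cos (k * L) ≠ 0 := by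
    intro k σ hk hσ hsec hc
    rw [hc, mul_zero] at hsec
    have hs : Real.sin (k * L) ≠ 0 := by
      intro hs
      have := Real.sin_sq_add_cos_sq (k * L)
      rw [hs, hc] at this; norm_num at this
    rcases mul_eq_zero.mp hsec with h | h
    · exact absurd h (ne_of_gt hk)
    · exact hs h
  have hc1 := hcos k₁ σ₁ hk01 hσ₁ hsec₁
  have hc2 := hcos k₂ σ₂ hk02 (lt_trans hσ₁ hσ₁₂) hsec₂
  -- σᵢ = kᵢ * tan (kᵢ L)
  have hσeq1 : σ₁ = k₁ * Real.tan (k₁ * L) := by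
    rw [Real.tan_eq_sin_div_cos]
    field_simp
    linarith [hsec₁]
  have hσeq2 : σ₂ = k₂ * Real.tan (k₂ * L) := by
    rw [Real.tan_eq_sin_div_cos]
    field_simp
    linarith [hsec₂]
  -- tan values on reduced window
  set x₁ := k₁ * L - n * π with hx1def
  set x₂ := k₂ * L - n * π with hx2def
  have hIoo : Set.Ioo (0:ℝ) (π/2) ⊆ Set.Ioo (-(π/2)) (π/2) := by
    intro y hy; exact ⟨by linarith [hy.1], hy.2⟩
  have htpos1 : 0 < Real.tan x₁ := Real.tan_pos_of_pos_of_lt_pi_div_two hx1.1 hx1.2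
  have htpos2 : 0 < Real.tan x₂ := Real.tan_pos_of_pos_of_lt_pi_div_two hx2.1 hx2.2
  by_contra hle
  push_neg at hle
  rcases eq_or_lt_of_le hle with heq | hlt
  · rw [heq] at hσeq2
    rw [hσeq1] at hσ₁₂
    linarith [hσeq2 ▸ hσ₁₂]
  · -- k₂ < k₁ ⇒ x₂ < x₁ ⇒ tan x₂ < tan x₁ ⇒ σ₂ < σ₁, contradiction
    have hxlt : x₂ < x₁ := by
      simp only [hx1def, hx2def]
      have : k₂ * L < k₁ * L := by nlinarith
      linarith
    have htlt : Real.tan x₂ < Real.tan x₁ :=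
      Real.strictMonoOn_tan (hIoo hx2) (hIoo hx1) hxlt
    have : σ₂ < σ₁ := by
      rw [hσeq1, hσeq2, ht1, ht2]
      exact mul_lt_mul'' hlt htlt (le_of_lt hk02) (le_of_lt htpos2)
    linarith
end

section
/- Let l > 0 and σ > 0. (i) For every n ∈ ℕ there exists a unique s ∈ (nπ/l, (n+1/2)π/l) with 2s·sin(sl) = σ·cos(sl). (ii) Moreover, every k > 0 satisfying cos(kl) = 0 or 2k·sin(kl) = σ·cos(kl) is either of the form (2m+1)π/(2l) for some m ∈ ℕ, or lies in (nπ/l, (n+1/2)π/l) for some n ∈ ℕ and satisfies 2k·sin(kl) = σ·cos(kl). Hence K_σ := {k > 0 : cos(kl) = 0 or 2k·sin(kl) = σ·cos(kl)} = {s_n : n ∈ ℕ} ∪ {(2m+1)π/(2l) : m ∈ ℕ}, where s_n denotes the unique solution from (i). -/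
open Real

namespace TwoStarAux

open Set

lemma cos_ne_zero_of_window {n : ℕ} {x : ℝ} (h1 : (n : ℝ) * π ≤ x)
    (h2 : x < (n : ℝ) * π + π / 2) : Real.cos x ≠ 0 := by
  have h := Real.cos_antiperiodic.sub_nat_mul_eq (x := x) n
  have hy : 0 < Real.cos (x - (n : ℝ) * π) := by
    apply Real.cos_pos_of_mem_Ioo
    constructor
    · linarith [Real.pi_pos]
    · linarith
  intro h0
  rw [h, h0, mul_zero] at hy
  exact lt_irrefl 0 hy

lemma tan_pos_of_window {n : ℕ} {x : ℝ} (h1 : (n : ℝ) * π < x)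
    (h2 : x < (n : ℝ) * π + π / 2) : 0 < Real.tan x := by
  rw [← Real.tan_sub_nat_mul_pi x n]
  exact Real.tan_pos_of_pos_of_lt_pi_div_two (by linarith) (by linarith)

lemma mono_window {n : ℕ} {x₁ x₂ : ℝ} (h₁ : x₁ ∈ Ioo ((n : ℝ) * π) ((n : ℝ) * π + π / 2))
    (h₂ : x₂ ∈ Ioo ((n : ℝ) * π) ((n : ℝ) * π + π / 2)) (hlt : x₁ < x₂) :
    2 * x₁ * Real.tan x₁ < 2 * x₂ * Real.tan x₂ := by
  have hn : (0 : ℝ) ≤ (n : ℝ) * π := by positivity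
  have ht : Real.tan x₁ < Real.tan x₂ := by
    rw [← Real.tan_sub_nat_mul_pi x₁ n, ← Real.tan_sub_nat_mul_pi x₂ n]
    exact Real.tan_lt_tan_of_nonneg_of_lt_pi_div_two (by linarith [h₁.1])
      (by linarith [h₂.2]) (by linarith)
  have hp1 : 0 < Real.tan x₁ := tan_pos_of_window h₁.1 h₁.2
  have hx1 : 0 < x₁ := lt_of_le_of_lt hn h₁.1
  have := mul_lt_mul'' hlt ht hx1.le hp1.le
  linarith

lemma exists_root (c : ℝ) (hc : 0 < c) (n : ℕ) :
    ∃ x ∈ Ioo ((n : ℝ) * π) ((n : ℝ) * π + π / 2), 2 * x * Real.tan x = c := by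
  have hπ := Real.pi_pos
  have hn : (0 : ℝ) ≤ (n : ℝ) * π := by positivity
  obtain ⟨y, hty, hy⟩ : ∃ y, 2 * c / π < Real.tan y ∧ y ∈ Ioo (π / 4) (π / 2) := by
    have h1 : ∀ᶠ y in nhdsWithin (π / 2) (Iio (π / 2)), 2 * c / π < Real.tan y :=
      Real.tendsto_tan_pi_div_two.eventually_gt_atTop _
    have h2 : ∀ᶠ y in nhdsWithin (π / 2) (Iio (π / 2)), y ∈ Ioo (π / 4) (π / 2) :=
      Ioo_mem_nhdsLT_of_mem ⟨by linarith, le_rfl⟩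
    exact (h1.and h2).exists
  set b := y + (n : ℝ) * π with hb
  have htb : Real.tan b = Real.tan y := Real.tan_add_nat_mul_pi y n
  have hby : (n : ℝ) * π < b := by simp only [hb]; linarith [hy.1]
  have hby2 : b < (n : ℝ) * π + π / 2 := by simp only [hb]; linarith [hy.2]
  have htanpos : 0 < Real.tan y := lt_trans (by positivity) hty
  have hfb : c < 2 * b * Real.tan b := by
    rw [htb]
    have key : (π / 2) * (2 * c / π) = c := by field_simp
    nlinarith [hy.1, hy.2, mul_lt_mul_of_pos_left hty (show (0:ℝ) < π/2 by linarith)]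
  have hcont : ContinuousOn (fun x => 2 * x * Real.tan x) (Icc ((n : ℝ) * π) b) := by
    apply ContinuousOn.mul
    · exact (continuous_const.mul continuous_id).continuousOn
    · apply Real.continuousOn_tan.mono
      intro x hx
      exact cos_ne_zero_of_window hx.1 (lt_of_le_of_lt hx.2 hby2)
  have hfa : 2 * ((n : ℝ) * π) * Real.tan ((n : ℝ) * π) = 0 := by
    rw [Real.tan_nat_mul_pi]; ring
  have hsub := intermediate_value_Ioo (le_of_lt hby) hcont
  have hcmem : c ∈ Ioo (2 * ((n : ℝ) * π) * Real.tan ((n : ℝ) * π)) (2 * b * Real.tan b) := by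
    rw [hfa]; exact ⟨hc, hfb⟩
  obtain ⟨x, hx, hfx⟩ := hsub hcmem
  exact ⟨x, ⟨hx.1, lt_trans hx.2 hby2⟩, hfx⟩

lemma existsUnique_root (c : ℝ) (hc : 0 < c) (n : ℕ) :
    ∃! x, x ∈ Ioo ((n : ℝ) * π) ((n : ℝ) * π + π / 2) ∧ 2 * x * Real.tan x = c := by
  obtain ⟨x, hx, hfx⟩ := exists_root c hc n
  refine ⟨x, ⟨hx, hfx⟩, ?_⟩
  rintro y ⟨hy, hfy⟩
  rcases lt_trichotomy y x with h | h | h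
  · exact absurd (hfy.trans hfx.symm) (ne_of_lt (mono_window hy hx h))
  · exact h
  · exact absurd (hfx.trans hfy.symm) (ne_of_lt (mono_window hx hy h))

lemma tan_eq_iff {x σ' : ℝ} (hc : Real.cos x ≠ 0) :
    2 * x * Real.tan x = σ' ↔ 2 * x * Real.sin x = σ' * Real.cos x := by
  rw [Real.tan_eq_sin_div_cos,
    show 2 * x * (Real.sin x / Real.cos x) = 2 * x * Real.sin x / Real.cos x by ring,
    div_eq_iff hc]

end TwoStarAux

/-- Structure of the secular set of the δ-coupled 2-star: (i) in each window
`(nπ/l, (n+1/2)π/l)` there is a unique symmetric-mode root of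
`2s sin(sl) = σ cos(sl)`; (ii) every element of
`K_σ = {k > 0 : cos(kl) = 0 ∨ 2k sin(kl) = σ cos(kl)}` is either an
antisymmetric mode `(2m+1)π/(2l)` or such a symmetric-mode root; hence `K_σ`
equals the union of these two families. -/
theorem two_star_secular_structure (l σ : ℝ) (hl : 0 < l) (hσ : 0 < σ) :
    (∀ n : ℕ, ∃! s : ℝ, s ∈ Set.Ioo ((n : ℝ) * π / l) (((n : ℝ) + 1 / 2) * π / l) ∧
      2 * s * Real.sin (s * l) = σ * Real.cos (s * l)) ∧
    (∀ k : ℝ, 0 < k →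
      (Real.cos (k * l) = 0 ∨ 2 * k * Real.sin (k * l) = σ * Real.cos (k * l)) →
      (∃ m : ℕ, k = (2 * (m : ℝ) + 1) * π / (2 * l)) ∨
      (∃ n : ℕ, k ∈ Set.Ioo ((n : ℝ) * π / l) (((n : ℝ) + 1 / 2) * π / l) ∧
        2 * k * Real.sin (k * l) = σ * Real.cos (k * l))) ∧
    (∀ s : ℕ → ℝ,
      (∀ n : ℕ, s n ∈ Set.Ioo ((n : ℝ) * π / l) (((n : ℝ) + 1 / 2) * π / l) ∧
        2 * s n * Real.sin (s n * l) = σ * Real.cos (s n * l)) →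
      {k : ℝ | 0 < k ∧ (Real.cos (k * l) = 0 ∨
          2 * k * Real.sin (k * l) = σ * Real.cos (k * l))}
        = Set.range s ∪ {k : ℝ | ∃ m : ℕ, k = (2 * (m : ℝ) + 1) * π / (2 * l)}) := by
  have hπ := Real.pi_pos
  have hl0 : l ≠ 0 := ne_of_gt hl
  have hcσl : 0 < σ * l := mul_pos hσ hl
  -- window translation
  have hwin : ∀ (n : ℕ) (t : ℝ),
      t ∈ Set.Ioo ((n : ℝ) * π / l) (((n : ℝ) + 1 / 2) * π / l) ↔
      t * l ∈ Set.Ioo ((n : ℝ) * π) ((n : ℝ) * π + π / 2) := by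
    intro n t
    rw [Set.mem_Ioo, Set.mem_Ioo, div_lt_iff₀ hl, lt_div_iff₀ hl,
      show ((n : ℝ) + 1 / 2) * π = (n : ℝ) * π + π / 2 by ring]
  -- equation translation
  have heq : ∀ t : ℝ, Real.cos (t * l) ≠ 0 →
      (2 * t * Real.sin (t * l) = σ * Real.cos (t * l) ↔
        2 * (t * l) * Real.tan (t * l) = σ * l) := by
    intro t hc
    rw [TwoStarAux.tan_eq_iff hc]
    constructor
    · intro h; linear_combination l * h
    · intro h; exact mul_left_cancel₀ hl0 (by linear_combination h)
  -- Part 1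
  have part1 : ∀ n : ℕ, ∃! t : ℝ,
      t ∈ Set.Ioo ((n : ℝ) * π / l) (((n : ℝ) + 1 / 2) * π / l) ∧
      2 * t * Real.sin (t * l) = σ * Real.cos (t * l) := by
    intro n
    obtain ⟨x, ⟨hx, hfx⟩, huniq⟩ := TwoStarAux.existsUnique_root (σ * l) hcσl n
    have hxl : x / l * l = x := div_mul_cancel₀ x hl0
    have hcx : Real.cos (x / l * l) ≠ 0 := by
      rw [hxl]; exact TwoStarAux.cos_ne_zero_of_window hx.1.le hx.2
    refine ⟨x / l, ⟨?_, ?_⟩, ?_⟩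
    · rw [hwin, hxl]; exact hx
    · rw [heq _ hcx, hxl]; exact hfx
    · rintro t ⟨htw, hte⟩
      have htw' := (hwin n t).mp htw
      have hct : Real.cos (t * l) ≠ 0 :=
        TwoStarAux.cos_ne_zero_of_window htw'.1.le htw'.2
      have hthis := huniq (t * l) ⟨htw', (heq t hct).mp hte⟩
      rw [← hthis, mul_div_cancel_right₀ t hl0]
  -- Part 2
  have part2 : ∀ k : ℝ, 0 < k →
      (Real.cos (k * l) = 0 ∨ 2 * k * Real.sin (k * l) = σ * Real.cos (k * l)) →
      (∃ m : ℕ, k = (2 * (m : ℝ) + 1) * π / (2 * l)) ∨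
      (∃ n : ℕ, k ∈ Set.Ioo ((n : ℝ) * π / l) (((n : ℝ) + 1 / 2) * π / l) ∧
        2 * k * Real.sin (k * l) = σ * Real.cos (k * l)) := by
    intro k hk hcase
    have hkl : 0 < k * l := mul_pos hk hl
    by_cases hc : Real.cos (k * l) = 0
    · left
      obtain ⟨m, hm⟩ := Real.cos_eq_zero_iff.mp hc
      have hm0 : 0 ≤ m := by
        by_contra h'
        push_neg at h'
        have hmz : m ≤ -1 := by omega
        have hmr : (m : ℝ) ≤ -1 := by exact_mod_cast hmz
        nlinarith [hm, hkl]
      refine ⟨m.toNat, ?_⟩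
      have hmn : ((m.toNat : ℕ) : ℝ) = (m : ℝ) := by
        exact_mod_cast Int.toNat_of_nonneg hm0
      rw [hmn]
      field_simp
      linarith [hm]
    · have heqn : 2 * k * Real.sin (k * l) = σ * Real.cos (k * l) :=
        hcase.resolve_left hc
      have htan : 0 < Real.tan (k * l) := by
        have h2k : (0 : ℝ) < 2 * k := by linarith
        have ht : Real.tan (k * l) = σ / (2 * k) := by
          rw [Real.tan_eq_sin_div_cos, div_eq_div_iff hc (ne_of_gt h2k)]
          linear_combination heqn
        rw [ht]; positivity
      set n : ℕ := (⌊k * l / π⌋).toNat with hndef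
      have hfl0 : 0 ≤ ⌊k * l / π⌋ := Int.floor_nonneg.mpr (by positivity)
      have hnr : ((n : ℕ) : ℝ) = ((⌊k * l / π⌋ : ℤ) : ℝ) := by
        rw [hndef]; exact_mod_cast Int.toNat_of_nonneg hfl0
      have h1 : (n : ℝ) * π ≤ k * l := by
        rw [hnr]
        have hle := Int.floor_le (k * l / π)
        have : ((⌊k * l / π⌋ : ℤ) : ℝ) * π ≤ (k * l / π) * π :=
          mul_le_mul_of_nonneg_right hle (le_of_lt hπ)
        calc ((⌊k * l / π⌋ : ℤ) : ℝ) * π ≤ (k * l / π) * π := this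
          _ = k * l := by field_simp
      have h2 : k * l < (n : ℝ) * π + π := by
        rw [hnr]
        have hlt := Int.lt_floor_add_one (k * l / π)
        have : (k * l / π) * π < (((⌊k * l / π⌋ : ℤ) : ℝ) + 1) * π :=
          mul_lt_mul_of_pos_right hlt hπ
        have he : (k * l / π) * π = k * l := by field_simp
        linarith [he ▸ this]
      have htany : Real.tan (k * l - (n : ℝ) * π) = Real.tan (k * l) :=
        Real.tan_sub_nat_mul_pi (k * l) n
      have hyne : k * l - (n : ℝ) * π ≠ 0 := by
        intro h0
        rw [h0, Real.tan_zero] at htany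
        linarith [htany ▸ htan]
      have hypos : 0 < k * l - (n : ℝ) * π :=
        lt_of_le_of_ne (by linarith) (Ne.symm hyne)
      have hylt : k * l - (n : ℝ) * π < π / 2 := by
        by_contra hge
        push_neg at hge
        rcases eq_or_lt_of_le hge with he | hlt2
        · have hcosy := Real.cos_antiperiodic.sub_nat_mul_eq (x := k * l) n
          have hz : Real.cos (k * l - (n : ℝ) * π) = 0 := by
            rw [← he]; exact Real.cos_pi_div_two
          rw [hz] at hcosy
          have : Real.cos (k * l) = 0 := by
            have hne : ((-1 : ℝ)) ^ n ≠ 0 := pow_ne_zero n (by norm_num)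
            exact (mul_eq_zero.mp hcosy.symm).resolve_left hne
          exact hc this
        · have hsy : 0 < Real.sin (k * l - (n : ℝ) * π) :=
            Real.sin_pos_of_pos_of_lt_pi hypos (by linarith)
          have hcy : Real.cos (k * l - (n : ℝ) * π) < 0 :=
            Real.cos_neg_of_pi_div_two_lt_of_lt hlt2 (by linarith)
          have hneg : Real.tan (k * l - (n : ℝ) * π) < 0 := by
            rw [Real.tan_eq_sin_div_cos]
            exact div_neg_of_pos_of_neg hsy hcy
          rw [htany] at hneg
          linarith
      right
      refine ⟨n, ?_, heqn⟩
      rw [hwin]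
      exact ⟨by linarith, by linarith⟩
  refine ⟨part1, part2, ?_⟩
  intro s hs
  ext k
  simp only [Set.mem_setOf_eq, Set.mem_union, Set.mem_range]
  constructor
  · rintro ⟨hk, hcase⟩
    rcases part2 k hk hcase with ⟨m, hm⟩ | ⟨n, hkw, hke⟩
    · right; exact ⟨m, hm⟩
    · left; exact ⟨n, (part1 n).unique (hs n) ⟨hkw, hke⟩⟩
  · rintro (⟨n, rfl⟩ | ⟨m, rfl⟩)
    · obtain ⟨hw, he⟩ := hs n
      refine ⟨?_, Or.inr he⟩
      have hnn : (0 : ℝ) ≤ (n : ℝ) * π / l := by positivity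
      linarith [hw.1]
    · constructor
      · positivity
      · left
        have hrw : (2 * (m : ℝ) + 1) * π / (2 * l) * l = (2 * (m : ℝ) + 1) * π / 2 := by
          field_simp
        rw [hrw]
        exact Real.cos_eq_zero_iff.mpr ⟨(m : ℤ), by push_cast; ring⟩
end
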